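/- Let G be a finite abstract simplicial complex and h : G → ℂ with |h(x)| = 1 for all x. Then every eigenvalue of the connection matrix L is nonzero, i.e., L is invertible, and |det L| = 1. -/

import Mathlib

open Finset

def IsSimplicialComplex (G : Finset (Finset ℕ)) : Prop :=
  (∀ x ∈ G, x.Nonempty) ∧ ∀ x ∈ G, ∀ y ⊆ x, y.Nonempty → y ∈ G

theorem stmt19 (G : Finset (Finset ℕ)) (hG : IsSimplicialComplex G)
    (h : Finset ℕ → ℂ) (hu : ∀ x ∈ G, ‖h x‖ = 1)
    (L : Matrix {x // x ∈ G} {x // x ∈ G} ℂ)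
    (hL : L = Matrix.of (fun x y =>
      ∑ z ∈ G.filter (fun z => z ⊆ x.1 ∧ z ⊆ y.1), h z)) :
    IsUnit L ∧ ‖L.det‖ = 1 := by
  letI : LinearOrder {x // x ∈ G} :=
    LinearOrder.lift' (fun x => toColex x.1)
      (fun a b hab => Subtype.ext (toColex.injective hab))
  set A : Matrix {x // x ∈ G} {x // x ∈ G} ℂ :=
    Matrix.of (fun x z => if z.1 ⊆ x.1 then h z.1 else 0) with hA
  set B : Matrix {x // x ∈ G} {x // x ∈ G} ℂ :=
    Matrix.of (fun z y => if z.1 ⊆ y.1 then 1 else 0) with hB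
  have hterm : ∀ x y z : {x // x ∈ G},
      A x z * B z y = if z.1 ⊆ x.1 ∧ z.1 ⊆ y.1 then h z.1 else 0 := by
    intro x y z
    simp only [hA, hB, Matrix.of_apply]
    by_cases h1 : z.1 ⊆ x.1 <;> by_cases h2 : z.1 ⊆ y.1 <;> simp [h1, h2]
  have hLAB : L = A * B := by
    rw [hL]
    ext x y
    calc (Matrix.of (fun x y : {x // x ∈ G} =>
          ∑ z ∈ G.filter (fun z => z ⊆ x.1 ∧ z ⊆ y.1), h z)) x y
        = ∑ z ∈ G.filter (fun z => z ⊆ x.1 ∧ z ⊆ y.1), h z := rfl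
      _ = ∑ z ∈ G, if z ⊆ x.1 ∧ z ⊆ y.1 then h z else 0 := by rw [Finset.sum_filter]
      _ = ∑ z : {x // x ∈ G}, if z.1 ⊆ x.1 ∧ z.1 ⊆ y.1 then h z.1 else 0 :=
          Finset.sum_subtype G (fun z => Iff.rfl) _
      _ = ∑ z : {x // x ∈ G}, A x z * B z y :=
          Finset.sum_congr rfl (fun z _ => (hterm x y z).symm)
      _ = (A * B) x y := (Matrix.mul_apply).symm
  have hdetA : A.det = ∏ x : {x // x ∈ G}, h x.1 := by
    rw [Matrix.det_of_lowerTriangular A (fun i j hij => by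
      simp only [hA, Matrix.of_apply, ite_eq_right_iff]
      intro hsub
      exact absurd (show toColex i.1 < toColex j.1 from hij)
        (not_lt.mpr (Finset.Colex.toColex_le_toColex_of_subset hsub)))]
    exact Finset.prod_congr rfl (fun x _ => by simp [hA])
  have hdetB : B.det = 1 := by
    rw [Matrix.det_of_upperTriangular (M := B) (fun i j hij => by
      simp only [hB, Matrix.of_apply, ite_eq_right_iff]
      intro hsub
      exact absurd (show toColex j.1 < toColex i.1 from hij)
        (not_lt.mpr (Finset.Colex.toColex_le_toColex_of_subset hsub)))]
    exact Finset.prod_eq_one (fun x _ => by simp [hB])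
  have hdetL : L.det = ∏ x : {x // x ∈ G}, h x.1 := by
    rw [hLAB, Matrix.det_mul, hdetA, hdetB, mul_one]
  have habs : ‖L.det‖ = 1 := by
    rw [hdetL, norm_prod]
    exact Finset.prod_eq_one (fun x _ => hu x.1 x.2)
  refine ⟨?_, habs⟩
  rw [Matrix.isUnit_iff_isUnit_det, isUnit_iff_ne_zero]
  intro hz
  rw [hz] at habs
  simp at habs
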